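/- Under the following hypotheses: ρ > 0, α > 0; f : ℝⁿ → ℝ differentiable, l-smooth, and satisfying quadratic gradient growth at x* with parameter μ > 0 (⟨∇f(x) − ∇f(x*), x − x*⟩ ≥ μ‖x − x*‖² for all x); each g_i convex and differentiable with ‖∇g_i(x) − ∇g_i(y)‖ ≤ L_{gi}‖x−y‖ and ‖∇g_i(x)‖ ≤ B_{gi}; (x*, λ*) a KKT point (∇f(x*) + Σ_i λ_i*∇g_i(x*) = 0, λ* ≥ 0, g(x*) ≤ 0, λ_i* g_i(x*) = 0); and λ_k ≥ 0 componentwise — the primal update x_{k+1} = x_k − α∇f(x_k) − α Σ_{i=1}^m [ρ g_i(x_k)+λ_{i,k}]_+ ∇g_i(x_k) satisfies ‖x_{k+1} − x*‖² ≤ (1 − 2μα + a₁α²)‖x_k − x*‖² + a₂α²‖λ_k − λ*‖² + 2α(U_ρ(x*,λ_k) − U_ρ(x_k,λ_k)) + 2α(U_ρ(x_k,λ*) − U_ρ(x*,λ*)), where a₁ = 2l² + 4θ₁², a₂ = 4B_g², B_g = sqrt(Σ_i B_{gi}²), L_g = sqrt(Σ_i L_{gi}²), and θ₁ = ρ B_g²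 + L_g‖λ*‖. -/

import Mathlib

open scoped RealInnerProductSpace Topology
open Filter Set

/-- scalar convexity of `t ↦ (max t 0)^2`: first-order inequality. -/
lemma maxsq_convex (s t : ℝ) : 2 * max s 0 * (t - s) ≤ (max t 0) ^ 2 - (max s 0) ^ 2 := by
  rcases le_or_gt s 0 with hs | hs
  · rw [max_eq_right hs]
    nlinarith [sq_nonneg (max t 0)]
  · rw [max_eq_left hs.le]
    rcases le_or_gt t 0 with ht | ht
    · rw [max_eq_right ht]; nlinarith
    · rw [max_eq_left ht.le]; nlinarith [sq_nonneg (t - s)]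

/-- First-order condition for a convex differentiable function. -/
lemma convex_grad_ineq {E : Type*} [NormedAddCommGroup E] [InnerProductSpace ℝ E]
    [CompleteSpace E] {g : E → ℝ} {g' : E → E} (hconv : ConvexOn ℝ Set.univ g)
    (hg : ∀ x, HasGradientAt g (g' x) x) (x y : E) :
    g x + ⟪g' x, y - x⟫ ≤ g y := by
  set φ : ℝ → ℝ := fun t => g (x + t • (y - x)) with hφ
  have hφ0 : φ 0 = g x := by simp [hφ]
  have hslope : ∀ t ∈ Set.Ioc (0:ℝ) 1, slope φ 0 t ≤ g y - g x := by
    intro t ht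
    have hcvx := hconv.2 (Set.mem_univ x) (Set.mem_univ y)
      (by linarith [ht.2] : (0:ℝ) ≤ 1 - t) ht.1.le (by ring)
    have hpt : (1 - t) • x + t • y = x + t • (y - x) := by
      rw [smul_sub]; module
    rw [hpt] at hcvx
    have h2 : φ t ≤ (1 - t) * g x + t * g y := hcvx
    rw [slope_def_field, div_le_iff₀ (by simpa using ht.1)]
    simp only [hφ0]
    nlinarith [ht.1, h2]
  have hderiv : HasDerivAt φ ⟪g' x, y - x⟫ 0 := by
    have h0 : x + (0:ℝ) • (y - x) = x := by simp
    have h1 : HasFDerivAt g (InnerProductSpace.toDual ℝ E (g' x)) (x + (0:ℝ) • (y - x)) := by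
      rw [h0]; exact (hg x).hasFDerivAt
    have h2 : HasDerivAt (fun t : ℝ => x + t • (y - x)) (y - x) 0 := by
      simpa using ((hasDerivAt_id (0:ℝ)).smul_const (y - x)).const_add x
    have h3 := h1.comp_hasDerivAt 0 h2
    simpa [InnerProductSpace.toDual_apply_apply, hφ, Function.comp_def] using h3
  have htends : Tendsto (slope φ 0) (𝓝[>] 0) (𝓝 ⟪g' x, y - x⟫) :=
    (hasDerivAt_iff_tendsto_slope.mp hderiv).mono_left
      (nhdsWithin_mono _ (fun t ht => ne_of_gt ht))
  have hle : ⟪g' x, y - x⟫ ≤ g y - g x := by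
    refine le_of_tendsto htends ?_
    filter_upwards [Ioc_mem_nhdsGT_of_mem (⟨le_refl 0, zero_lt_one⟩ : (0:ℝ) ∈ Set.Ico (0:ℝ) 1)]
      with t ht using hslope t ht
  linarith

set_option maxHeartbeats 1000000 in
/-- One-step contraction estimate for the primal update of Aug-PDG:
`‖x_{k+1} − x*‖² ≤ (1 − 2μα + a₁α²)‖x_k − x*‖² + a₂α²‖λ_k − λ*‖²
  + 2α(U(x*,λ_k) − U(x_k,λ_k)) + 2α(U(x_k,λ*) − U(x*,λ*))`,
with `a₁ = 2l² + 4θ₁²`, `a₂ = 4B_g²`, `θ₁ = ρB_g² + L_g‖λ*‖`. -/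
theorem augPDG_primal_step_bound {n m : ℕ} (ρ α : ℝ) (hρ : 0 < ρ) (hα : 0 < α)
    (f : EuclideanSpace ℝ (Fin n) → ℝ)
    (f' : EuclideanSpace ℝ (Fin n) → EuclideanSpace ℝ (Fin n)) (l μ : ℝ) (hμ : 0 < μ)
    (hf : ∀ x, HasGradientAt f (f' x) x)
    (hfl : ∀ x y, ‖f' x - f' y‖ ≤ l * ‖x - y‖)
    (g : Fin m → EuclideanSpace ℝ (Fin n) → ℝ)
    (g' : Fin m → EuclideanSpace ℝ (Fin n) → EuclideanSpace ℝ (Fin n))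
    (L B : Fin m → ℝ)
    (hgconv : ∀ i, ConvexOn ℝ Set.univ (g i))
    (hg : ∀ i x, HasGradientAt (g i) (g' i x) x)
    (hgL : ∀ i x y, ‖g' i x - g' i y‖ ≤ L i * ‖x - y‖)
    (hgB : ∀ i x, ‖g' i x‖ ≤ B i)
    (xs : EuclideanSpace ℝ (Fin n)) (ls : EuclideanSpace ℝ (Fin m))
    (hqg : ∀ x : EuclideanSpace ℝ (Fin n), μ * ‖x - xs‖ ^ 2 ≤ ⟪f' x - f' xs, x - xs⟫)
    (hstat : f' xs + ∑ i, ls i • g' i xs = 0)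
    (hls : ∀ i, 0 ≤ ls i) (hgs : ∀ i, g i xs ≤ 0) (hcomp : ∀ i, ls i * g i xs = 0)
    (Bg Lg θ₁ a₁ a₂ : ℝ)
    (hBg : Bg = Real.sqrt (∑ i, (B i) ^ 2)) (hLg : Lg = Real.sqrt (∑ i, (L i) ^ 2))
    (hθ₁ : θ₁ = ρ * Bg ^ 2 + Lg * ‖ls‖)
    (ha₁ : a₁ = 2 * l ^ 2 + 4 * θ₁ ^ 2) (ha₂ : a₂ = 4 * Bg ^ 2)
    (U : EuclideanSpace ℝ (Fin n) → EuclideanSpace ℝ (Fin m) → ℝ)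
    (hU : ∀ x μ', U x μ' = ∑ i, ((max (ρ * g i x + μ' i) 0) ^ 2 - (μ' i) ^ 2) / (2 * ρ))
    (xk xk1 : EuclideanSpace ℝ (Fin n)) (lamk : EuclideanSpace ℝ (Fin m))
    (hlamk : ∀ i, 0 ≤ lamk i)
    (hupd : xk1 = xk - α • f' xk - α • ∑ i, max (ρ * g i xk + lamk i) 0 • g' i xk) :
    ‖xk1 - xs‖ ^ 2 ≤
      (1 - 2 * μ * α + a₁ * α ^ 2) * ‖xk - xs‖ ^ 2 + a₂ * α ^ 2 * ‖lamk - ls‖ ^ 2 +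
        2 * α * (U xs lamk - U xk lamk) + 2 * α * (U xk ls - U xs ls) := by
  -- penalty first-order convexity inequality
  have hUgrad : ∀ (x y : EuclideanSpace ℝ (Fin n)) (lam : EuclideanSpace ℝ (Fin m)),
      ⟪∑ i, max (ρ * g i x + lam i) 0 • g' i x, y - x⟫ ≤ U y lam - U x lam := by
    intro x y lam
    rw [hU, hU, ← Finset.sum_sub_distrib, sum_inner]
    apply Finset.sum_le_sum
    intro i _
    have hgi : g i x + ⟪g' i x, y - x⟫ ≤ g i y := convex_grad_ineq (hgconv i) (hg i) x y
    have hmax := maxsq_convex (ρ * g i x + lam i) (ρ * g i y + lam i)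
    have h0 : (0:ℝ) ≤ max (ρ * g i x + lam i) 0 := le_max_right _ _
    have h1 : max (ρ * g i x + lam i) 0 * ⟪g' i x, y - x⟫
        ≤ max (ρ * g i x + lam i) 0 * (g i y - g i x) :=
      mul_le_mul_of_nonneg_left (by linarith) h0
    rw [real_inner_smul_left, div_sub_div_same, le_div_iff₀ (by positivity : (0:ℝ) < 2 * ρ)]
    nlinarith [h1, hmax, hρ]
  -- KKT: max (ρ g_i(x*) + λ*_i) 0 = λ*_i
  have hq : ∀ i, max (ρ * g i xs + ls i) 0 = ls i := by
    intro i
    rcases (hls i).eq_or_lt with h | h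
    · rw [← h, add_zero, max_eq_right]
      have := mul_nonneg hρ.le (neg_nonneg.mpr (hgs i))
      nlinarith
    · have hg0 : g i xs = 0 := (mul_eq_zero.mp (hcomp i)).resolve_left (ne_of_gt h)
      rw [hg0, mul_zero, zero_add, max_eq_left (hls i)]
  -- Lipschitz bound for g i
  have hgLip : ∀ i (x y : EuclideanSpace ℝ (Fin n)), |g i x - g i y| ≤ B i * ‖x - y‖ := by
    intro i x y
    have := Convex.norm_image_sub_le_of_norm_hasFDerivWithin_le
      (f' := fun z => InnerProductSpace.toDual ℝ _ (g' i z))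
      (fun z _ => ((hg i z).hasFDerivAt).hasFDerivWithinAt)
      (fun z _ => by simpa using hgB i z) convex_univ (Set.mem_univ y) (Set.mem_univ x)
    simpa [Real.norm_eq_abs] using this
  have hB0 : ∀ i, 0 ≤ B i := fun i => le_trans (norm_nonneg _) (hgB i 0)
  have hnsq : ∀ (z : EuclideanSpace ℝ (Fin m)), ‖z‖ ^ 2 = ∑ i, (z i) ^ 2 := by
    intro z
    rw [EuclideanSpace.norm_eq, Real.sq_sqrt (by positivity)]
    simp [Real.norm_eq_abs, sq_abs]
  -- Cauchy-Schwarz bounds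
  have hcs1 : ∑ i, B i * |lamk i - ls i| ≤ Bg * ‖lamk - ls‖ := by
    refine le_of_sq_le_sq ?_ (by rw [hBg]; positivity)
    calc (∑ i, B i * |lamk i - ls i|) ^ 2
        ≤ (∑ i, (B i) ^ 2) * ∑ i, |lamk i - ls i| ^ 2 :=
          Finset.sum_mul_sq_le_sq_mul_sq Finset.univ _ _
      _ = Bg ^ 2 * ‖lamk - ls‖ ^ 2 := by
          rw [hBg, Real.sq_sqrt (by positivity), hnsq (lamk - ls)]
          simp [sq_abs, PiLp.sub_apply]
      _ = (Bg * ‖lamk - ls‖) ^ 2 := by ring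
  have hcs2 : ∑ i, ls i * L i ≤ ‖ls‖ * Lg := by
    have h1 : ∑ i, ls i * L i ≤ ∑ i, ls i * |L i| :=
      Finset.sum_le_sum fun i _ => mul_le_mul_of_nonneg_left (le_abs_self _) (hls i)
    refine h1.trans (le_of_sq_le_sq ?_ (by rw [hLg]; positivity))
    calc (∑ i, ls i * |L i|) ^ 2
        ≤ (∑ i, (ls i) ^ 2) * ∑ i, |L i| ^ 2 :=
          Finset.sum_mul_sq_le_sq_mul_sq Finset.univ _ _
      _ = ‖ls‖ ^ 2 * Lg ^ 2 := by
          rw [hnsq ls, hLg, Real.sq_sqrt (by positivity)]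
          simp [sq_abs]
      _ = (‖ls‖ * Lg) ^ 2 := by ring
  -- abbreviations
  set w1 := ∑ i, max (ρ * g i xk + lamk i) 0 • g' i xk with hw1
  set ws := ∑ i, ls i • g' i xs with hws
  set v := f' xk + w1 with hv
  have h0 : f' xs + ws = 0 := hstat
  have hfs : f' xs = -ws := eq_neg_of_add_eq_zero_left h0
  -- convexity consequences
  have hAd : U xk lamk - U xs lamk ≤ ⟪w1, xk - xs⟫ := by
    have h := hUgrad xk xs lamk
    rw [← hw1] at h
    rw [show xs - xk = -(xk - xs) by abel, inner_neg_right] at h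
    linarith
  have hBd : ⟪ws, xk - xs⟫ ≤ U xk ls - U xs ls := by
    have h := hUgrad xs xk ls
    simp only [hq] at h
    rw [← hws] at h
    exact h
  -- update decomposition
  have hupd' : xk1 - xs = (xk - xs) - α • v := by
    rw [hupd, hv, smul_add]; abel
  have hexp : ‖xk1 - xs‖ ^ 2 = ‖xk - xs‖ ^ 2 - 2 * α * ⟪v, xk - xs⟫ + α ^ 2 * ‖v‖ ^ 2 := by
    rw [hupd', norm_sub_sq_real, real_inner_smul_right, norm_smul, Real.norm_eq_abs,
      mul_pow, sq_abs, real_inner_comm]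
    ring
  -- inner product lower bound
  have hinner : μ * ‖xk - xs‖ ^ 2 + (U xk lamk - U xs lamk) - (U xk ls - U xs ls)
      ≤ ⟪v, xk - xs⟫ := by
    have h1 := hqg xk
    have hveq : ⟪v, xk - xs⟫
        = ⟪f' xk - f' xs, xk - xs⟫ - ⟪ws, xk - xs⟫ + ⟪w1, xk - xs⟫ := by
      rw [show v = ((f' xk - f' xs) - ws) + w1 by rw [hv, hfs]; abel,
        inner_add_left, inner_sub_left, inner_sub_left]
    rw [hveq]
    linarith
  -- norm upper bound
  have hwd : ‖w1 - ws‖ ≤ θ₁ * ‖xk - xs‖ + Bg * ‖lamk - ls‖ := by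
    have hterm : ∀ i, ‖max (ρ * g i xk + lamk i) 0 • g' i xk - ls i • g' i xs‖
        ≤ ρ * ‖xk - xs‖ * (B i) ^ 2 + B i * |lamk i - ls i| + (ls i * L i) * ‖xk - xs‖ := by
      intro i
      have hpl : |max (ρ * g i xk + lamk i) 0 - ls i|
          ≤ ρ * (B i * ‖xk - xs‖) + |lamk i - ls i| := by
        conv_lhs => rw [← hq i]
        refine le_trans (abs_max_sub_max_le_abs _ _ _) ?_
        rw [show (ρ * g i xk + lamk i) - (ρ * g i xs + ls i)
            = ρ * (g i xk - g i xs) + (lamk i - ls i) by ring]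
        refine le_trans (abs_add_le _ _) ?_
        rw [abs_mul, abs_of_pos hρ]
        have h2 := hgLip i xk xs
        have h3 := mul_le_mul_of_nonneg_left h2 hρ.le
        linarith
      calc ‖max (ρ * g i xk + lamk i) 0 • g' i xk - ls i • g' i xs‖
          = ‖(max (ρ * g i xk + lamk i) 0 - ls i) • g' i xk
              + ls i • (g' i xk - g' i xs)‖ := by rw [sub_smul, smul_sub]; abel_nf
        _ ≤ ‖(max (ρ * g i xk + lamk i) 0 - ls i) • g' i xk‖
              + ‖ls i • (g' i xk - g' i xs)‖ := norm_add_le _ _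
        _ ≤ |max (ρ * g i xk + lamk i) 0 - ls i| * B i + ls i * (L i * ‖xk - xs‖) := by
            rw [norm_smul, norm_smul, Real.norm_eq_abs, Real.norm_eq_abs,
              abs_of_nonneg (hls i)]
            have ha := mul_le_mul_of_nonneg_left (hgB i xk)
              (abs_nonneg (max (ρ * g i xk + lamk i) 0 - ls i))
            have hb := mul_le_mul_of_nonneg_left (hgL i xk xs) (hls i)
            linarith
        _ ≤ (ρ * (B i * ‖xk - xs‖) + |lamk i - ls i|) * B i + ls i * (L i * ‖xk - xs‖) :=
            add_le_add_left (mul_le_mul_of_nonneg_right hpl (hB0 i)) _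
        _ = ρ * ‖xk - xs‖ * (B i) ^ 2 + B i * |lamk i - ls i| + (ls i * L i) * ‖xk - xs‖ := by
            ring
    calc ‖w1 - ws‖
        = ‖∑ i, (max (ρ * g i xk + lamk i) 0 • g' i xk - ls i • g' i xs)‖ := by
          rw [hw1, hws, ← Finset.sum_sub_distrib]
      _ ≤ ∑ i, ‖max (ρ * g i xk + lamk i) 0 • g' i xk - ls i • g' i xs‖ :=
          norm_sum_le _ _
      _ ≤ ∑ i, (ρ * ‖xk - xs‖ * (B i) ^ 2 + B i * |lamk i - ls i|
            + (ls i * L i) * ‖xk - xs‖) := Finset.sum_le_sum fun i _ => hterm i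
      _ = ρ * ‖xk - xs‖ * (∑ i, (B i) ^ 2) + (∑ i, B i * |lamk i - ls i|)
            + (∑ i, ls i * L i) * ‖xk - xs‖ := by
          rw [Finset.sum_add_distrib, Finset.sum_add_distrib, ← Finset.mul_sum,
            ← Finset.sum_mul]
      _ ≤ ρ * ‖xk - xs‖ * Bg ^ 2 + Bg * ‖lamk - ls‖ + (‖ls‖ * Lg) * ‖xk - xs‖ := by
          have hBg2 : ∑ i, (B i) ^ 2 = Bg ^ 2 := by
            rw [hBg, Real.sq_sqrt (by positivity)]
          rw [hBg2]
          have := mul_le_mul_of_nonneg_right hcs2 (norm_nonneg (xk - xs))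
          linarith [hcs1]
      _ = θ₁ * ‖xk - xs‖ + Bg * ‖lamk - ls‖ := by rw [hθ₁]; ring
  have hfd : ‖f' xk - f' xs‖ ^ 2 ≤ l ^ 2 * ‖xk - xs‖ ^ 2 := by
    have := hfl xk xs
    nlinarith [norm_nonneg (f' xk - f' xs)]
  have hwd2 : ‖w1 - ws‖ ^ 2 ≤ 2 * θ₁ ^ 2 * ‖xk - xs‖ ^ 2 + 2 * Bg ^ 2 * ‖lamk - ls‖ ^ 2 := by
    nlinarith [norm_nonneg (w1 - ws), hwd,
      sq_nonneg (θ₁ * ‖xk - xs‖ - Bg * ‖lamk - ls‖),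
      sq_nonneg (θ₁ * ‖xk - xs‖ + Bg * ‖lamk - ls‖)]
  have hvsq : ‖v‖ ^ 2 ≤ a₁ * ‖xk - xs‖ ^ 2 + a₂ * ‖lamk - ls‖ ^ 2 := by
    have h1 : ‖v‖ ≤ ‖f' xk - f' xs‖ + ‖w1 - ws‖ := by
      rw [show v = (f' xk - f' xs) + (w1 - ws) by rw [hv, hfs]; abel]
      exact norm_add_le _ _
    have h2 : ‖v‖ ^ 2 ≤ (‖f' xk - f' xs‖ + ‖w1 - ws‖) ^ 2 :=
      pow_le_pow_left₀ (norm_nonneg _) h1 2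
    rw [ha₁, ha₂]
    nlinarith [hfd, hwd2, sq_nonneg (‖f' xk - f' xs‖ - ‖w1 - ws‖),
      norm_nonneg (f' xk - f' xs), norm_nonneg (w1 - ws)]
  -- final assembly
  rw [hexp]
  have ht1 := mul_le_mul_of_nonneg_left hinner (by linarith : (0:ℝ) ≤ 2 * α)
  have ht2 := mul_le_mul_of_nonneg_left hvsq (sq_nonneg α)
  nlinarith [ht1, ht2]
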